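/- The modular function of a finite-dimensional Lie ∞-algebra equals the divergence of its homological vector field: ω_E = div(Q_E), where ω_E^{(k)}(x₁,…,x_k) = str(l_{k+1}(x₁,…,x_k, −)) for homogeneous arguments whose degrees sum to −1. -/

import Mathlib

open scoped BigOperators

noncomputable section

/-- The Koszul sign of a permutation `σ` acting on homogeneous elements whose
degrees are given by `d`. -/
def koszulSign (K : Type*) [Field K] {n : ℕ} (σ : Equiv.Perm (Fin n)) (d : Fin n → ℤ) : K :=
  ∏ p ∈ Finset.univ.filter (fun p : Fin n × Fin n => p.1 < p.2 ∧ σ p.2 < σ p.1),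
    (-1 : K) ^ (d (σ p.1) * d (σ p.2))

/-- `σ` is an `(i, n-i)`-unshuffle. -/
def IsUnshuffle {n : ℕ} (i : ℕ) (σ : Equiv.Perm (Fin n)) : Prop :=
  (∀ a b : Fin n, a < b → (b : ℕ) < i → σ a < σ b) ∧
  (∀ a b : Fin n, a < b → i ≤ (a : ℕ) → σ a < σ b)

instance {n : ℕ} (i : ℕ) (σ : Equiv.Perm (Fin n)) : Decidable (IsUnshuffle i σ) := by
  unfold IsUnshuffle; infer_instance

/-- The nested term `Φ_{n-i+1}(l_{i}(x_{σ(1)},…,x_{σ(i)}), x_{σ(i+1)},…,x_{σ(n)})`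
appearing in the generalized Jacobi identities (here the arity of the inner bracket
is `i.1 + 1`). -/
def nestedTerm {K : Type*} [Field K] {E W : Type*} [AddCommGroup E] [Module K E]
    [AddCommGroup W] [Module K W]
    (l : ∀ n : ℕ, MultilinearMap K (fun _ : Fin n => E) E)
    (Φ : ∀ n : ℕ, MultilinearMap K (fun _ : Fin n => E) W)
    (n : ℕ) (i : Fin n) (σ : Equiv.Perm (Fin n)) (x : Fin n → E) : W :=
  Φ ((n - (i.1 + 1)) + 1)
    (Fin.cons (l (i.1 + 1) (fun a => x (σ (Fin.castLE i.isLt a))))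
      (fun a : Fin (n - (i.1 + 1)) =>
        x (σ ⟨(i.1 + 1) + a.1, by have := a.isLt; have := i.isLt; omega⟩)))

/-- A symmetric Lie `∞`-algebra structure on a `ℤ`-graded vector space, the grading
being given by an (internal) family of subspaces `𝒜`: a family of
graded-symmetric multilinear brackets of degree `+1` satisfying the generalized
Jacobi identities. -/
structure GradedLieInfty (K : Type*) [Field K] (E : Type*) [AddCommGroup E] [Module K E]
    (𝒜 : ℤ → Submodule K E) where
  l : ∀ n : ℕ, MultilinearMap K (fun _ : Fin n => E) E
  deg : ∀ (n : ℕ), 1 ≤ n → ∀ (d : Fin n → ℤ) (x : Fin n → E),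
    (∀ a, x a ∈ 𝒜 (d a)) → l n x ∈ 𝒜 ((∑ a, d a) + 1)
  symm : ∀ (n : ℕ), 1 ≤ n → ∀ (σ : Equiv.Perm (Fin n)) (d : Fin n → ℤ) (x : Fin n → E),
    (∀ a, x a ∈ 𝒜 (d a)) → l n (fun a => x (σ a)) = koszulSign K σ d • l n x
  jacobi : ∀ (n : ℕ), 1 ≤ n → ∀ (d : Fin n → ℤ) (x : Fin n → E),
    (∀ a, x a ∈ 𝒜 (d a)) →
    ∑ i : Fin n,
      ∑ σ ∈ Finset.univ.filter (fun σ : Equiv.Perm (Fin n) => IsUnshuffle (i.1 + 1) σ),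
        koszulSign K σ d • nestedTerm l l n i σ x = 0

/-- The degree-`0` block of an endomorphism of a graded vector space. -/
def gradedPiece {K : Type*} [Field K] {E : Type*} [AddCommGroup E] [Module K E]
    (𝒜 : ℤ → Submodule K E) [DirectSum.Decomposition 𝒜] (f : E →ₗ[K] E) (i : ℤ) :
    𝒜 i →ₗ[K] 𝒜 i :=
  (DirectSum.component K ℤ (fun j => 𝒜 j) i).comp
    ((DirectSum.decomposeLinearEquiv 𝒜).toLinearMap.comp (f.comp (𝒜 i).subtype))

/-- The supertrace of an endomorphism of a graded vector space: the alternating sum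
of the traces of its diagonal blocks. -/
def str (K : Type*) [Field K] {E : Type*} [AddCommGroup E] [Module K E]
    (𝒜 : ℤ → Submodule K E) [DirectSum.Decomposition 𝒜] (f : E →ₗ[K] E) : K :=
  ∑ᶠ i : ℤ, (-1 : K) ^ i * LinearMap.trace K (𝒜 i) (gradedPiece 𝒜 f i)



lemma str_eq_basis_sum (K : Type) [Field K] (E : Type) [AddCommGroup E] [Module K E]
    [FiniteDimensional K E] (𝒜 : ℤ → Submodule K E) [DirectSum.Decomposition 𝒜]
    (ι : Type) [Fintype ι] [DecidableEq ι] (b : Module.Basis ι K E) (deg : ι → ℤ)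
    (f : E →ₗ[K] E) (hf : ∀ j, f (b j) ∈ 𝒜 (deg j)) :
    (∑ᶠ i : ℤ, (-1 : K) ^ i *
        LinearMap.trace K (𝒜 i)
          ((DirectSum.component K ℤ (fun j => 𝒜 j) i).comp
            ((DirectSum.decomposeLinearEquiv 𝒜).toLinearMap.comp (f.comp (𝒜 i).subtype))))
      = ∑ j : ι, (-1 : K) ^ (deg j) * b.coord j (f (b j)) := by
  -- per-block trace
  have key : ∀ i : ℤ, (-1 : K) ^ i *
      LinearMap.trace K (𝒜 i)
        ((DirectSum.component K ℤ (fun j => 𝒜 j) i).comp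
          ((DirectSum.decomposeLinearEquiv 𝒜).toLinearMap.comp (f.comp (𝒜 i).subtype)))
      = ∑ j : ι, if deg j = i then (-1 : K) ^ (deg j) * b.coord j (f (b j)) else 0 := by
    intro i
    set A : E →ₗ[K] 𝒜 i :=
      (DirectSum.component K ℤ (fun j => 𝒜 j) i).comp
        ((DirectSum.decomposeLinearEquiv 𝒜).toLinearMap.comp f) with hA
    have h1 : (DirectSum.component K ℤ (fun j => 𝒜 j) i).comp
        ((DirectSum.decomposeLinearEquiv 𝒜).toLinearMap.comp (f.comp (𝒜 i).subtype))
        = A ∘ₗ (𝒜 i).subtype := by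
      rw [hA]; ext v; rfl
    rw [h1, LinearMap.trace_comp_comm' (𝒜 i).subtype A,
      LinearMap.trace_eq_matrix_trace K b, Matrix.trace, Finset.mul_sum]
    refine Finset.sum_congr rfl fun j _ => ?_
    have hval : (((𝒜 i).subtype ∘ₗ A) (b j)) =
        ((DirectSum.decompose 𝒜 (f (b j)) i : 𝒜 i) : E) := rfl
    rw [Matrix.diag_apply, LinearMap.toMatrix_apply, hval]
    by_cases h : deg j = i
    · rw [if_pos h, DirectSum.decompose_of_mem_same 𝒜 (h ▸ hf j)]
      have : ((-1 : K) ^ i) = (-1 : K) ^ (deg j) := by rw [h]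
      rw [this]; rfl
    · rw [if_neg h, DirectSum.decompose_of_mem_ne 𝒜 (hf j) h]
      simp
  calc (∑ᶠ i : ℤ, (-1 : K) ^ i *
        LinearMap.trace K (𝒜 i)
          ((DirectSum.component K ℤ (fun j => 𝒜 j) i).comp
            ((DirectSum.decomposeLinearEquiv 𝒜).toLinearMap.comp (f.comp (𝒜 i).subtype))))
      = ∑ᶠ i : ℤ, ∑ j : ι, if deg j = i then (-1 : K) ^ (deg j) * b.coord j (f (b j)) else 0 := by
        exact finsum_congr key
    _ = ∑ i ∈ Finset.image deg Finset.univ,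
          ∑ j : ι, if deg j = i then (-1 : K) ^ (deg j) * b.coord j (f (b j)) else 0 := by
        apply finsum_eq_finset_sum_of_support_subset
        intro i hi
        simp only [Function.mem_support] at hi
        by_contra hmem
        apply hi
        refine Finset.sum_eq_zero fun j _ => ?_
        rw [if_neg]
        intro h
        exact hmem (by simp [← h])
    _ = ∑ j : ι, ∑ i ∈ Finset.image deg Finset.univ,
          if deg j = i then (-1 : K) ^ (deg j) * b.coord j (f (b j)) else 0 :=
        Finset.sum_comm
    _ = ∑ j : ι, (-1 : K) ^ (deg j) * b.coord j (f (b j)) := by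
        refine Finset.sum_congr rfl fun j _ => ?_
        rw [Finset.sum_ite_eq (Finset.image deg Finset.univ) (deg j)
          (fun _ => (-1 : K) ^ (deg j) * b.coord j (f (b j)))]
        simp

/-- the modular function of a finite-dimensional Lie `∞`-algebra
equals the divergence of its homological vector field `Q_E`.  In a homogeneous
basis `(b j)` with degrees `deg j` and dual coordinates `b.coord j`, the arity-`k`
component of the divergence of `Q_E` evaluated on a homogeneous tuple
`x₁ ⊙ … ⊙ x_k` of total degree `-1` is
`∑_j (-1)^{|x_j|} ⟨ξ^j, l_{k+1}(x₁,…,x_k,x_j)⟩`, and the modular function is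
`ω^{(k)}(x₁,…,x_k) = str (l_{k+1}(x₁,…,x_k,−))`. -/
theorem stmt8 (K : Type) [Field K] [CharZero K] (E : Type) [AddCommGroup E] [Module K E]
    [FiniteDimensional K E] (𝒜 : ℤ → Submodule K E) [DirectSum.Decomposition 𝒜]
    (L : GradedLieInfty K E 𝒜)
    (ι : Type) [Fintype ι] [DecidableEq ι] (b : Module.Basis ι K E) (deg : ι → ℤ)
    (hb : ∀ j : ι, b j ∈ 𝒜 (deg j))
    (k : ℕ) (d : Fin k → ℤ) (x : Fin k → E)
    (hx : ∀ a, x a ∈ 𝒜 (d a)) (hsum : ∑ a, d a = -1) :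
    str K 𝒜 ((L.l (k + 1)).toLinearMap (Fin.snoc x 0) (Fin.last k))
      = ∑ j : ι, (-1 : K) ^ (deg j) * b.coord j (L.l (k + 1) (Fin.snoc x (b j))) := by
  simp only [str, gradedPiece]
  set f := (L.l (k + 1)).toLinearMap (Fin.snoc x 0) (Fin.last k) with hfdef
  have hfapp : ∀ v : E, f v = L.l (k + 1) (Fin.snoc x v) := by
    intro v
    show L.l (k+1) (Function.update (Fin.snoc x 0) (Fin.last k) v) = _
    rw [Fin.update_snoc_last]
  have hf : ∀ j : ι, f (b j) ∈ 𝒜 (deg j) := by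
    intro j
    rw [hfapp]
    have := L.deg (k+1) (Nat.le_add_left 1 k) (Fin.snoc d (deg j)) (Fin.snoc x (b j))
      (fun a => by
        induction a using Fin.lastCases with
        | last => simpa using hb j
        | cast a => simpa using hx a)
    rw [Fin.sum_snoc, hsum] at this
    simpa using this
  have := str_eq_basis_sum K E 𝒜 ι b deg f hf
  rw [this]
  exact Finset.sum_congr rfl fun j _ => by rw [hfapp]


end
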